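/- Let C be a braided monoidal category with braiding c, and X an object of C. Define for each object Y the endomorphism x_Y : Y⊗X → Y⊗X as c_{X,Y} ∘ c_{Y,X}, and c̄_Y : Y⊗X⊗X → Y⊗X⊗X as 1_Y ⊗ c_{X,X}. Then c̄_Y ∘ (x_Y ⊗ 1_X) ∘ c̄_Y = 1_Y ⊗ x', where 1_Y ⊗ x' denotes the double braiding of X with Y⊗X in the second X-slot; i.e., the affine braid relation c(x⊗1)c = 1⊗x holds for the functor of right tensoring with X. -/

import Mathlib

open CategoryTheory MonoidalCategory

/-- Let `C` be a braided monoidal category with braiding `c`, and `X` an object of `C`.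
For each object `Y`, let `x_Y : Y⊗X → Y⊗X` be the double braiding `c_{X,Y} ∘ c_{Y,X}`, and let
`c̄_Y : (Y⊗X)⊗X → (Y⊗X)⊗X` be `1_Y ⊗ c_{X,X}` (conjugated by the associator).  Then the affine
braid relation `c(x⊗1)c = 1⊗x` holds for the functor of right tensoring with `X`:
`c̄_Y ∘ (x_Y ⊗ 1_X) ∘ c̄_Y` equals the double braiding `x_{Y⊗X}` of `X` with `Y⊗X`. -/
theorem right_tensoring_affine_braid_relation
    {C : Type*} [Category C] [MonoidalCategory C] [BraidedCategory C] (X Y : C) :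
    (((α_ Y X X).hom ≫ (Y ◁ (β_ X X).hom) ≫ (α_ Y X X).inv) ≫
        (((β_ Y X).hom ≫ (β_ X Y).hom) ▷ X) ≫
        ((α_ Y X X).hom ≫ (Y ◁ (β_ X X).hom) ≫ (α_ Y X X).inv))
      = (β_ (Y ⊗ X) X).hom ≫ (β_ X (Y ⊗ X)).hom := by
  simp [BraidedCategory.braiding_tensor_right_hom, BraidedCategory.braiding_tensor_left_hom]
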